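/- Let G be a near-bipartite brick with removable doubleton {e1, e2}, H = G − {e1, e2} bipartite with bipartition (U, W), e1 ⊆ U, e2 ⊆ W. If e is an edge of G not in {e1, e2} that is nonremovable in G but removable in H (type I), then there exist partitions (A1, A2) of U and (B1, B2) of W with |B1| = |A1| + 1, |A2| = |B2| + 1, both ends of e1 in A2, both ends of e2 in B1, and e the unique edge of G joining A1 to B2; moreover, B1 and A2 are barriers of G − e. -/

import Mathlib

open SimpleGraph Set

universe u
variable {V : Type u}

/-- Number of odd components of a graph. -/
noncomputable def oddComps (G : SimpleGraph V) : ℕ :=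
  Nat.card {c : G.ConnectedComponent // Odd (Nat.card c.supp)}

/-- `S` is a barrier of `G`: the number of odd components of `G − S` equals `|S|`. -/
def IsBarrier (G : SimpleGraph V) (S : Set V) : Prop :=
  oddComps (G.induce Sᶜ) = S.ncard

/-- `G` has a perfect matching. -/
def HasPM (G : SimpleGraph V) : Prop :=
  ∃ M : Subgraph G, M.IsPerfectMatching

/-- `G` is matching covered. -/
def MatchingCovered (G : SimpleGraph V) : Prop :=
  G.Connected ∧ G.edgeSet.Nonempty ∧
    ∀ e ∈ G.edgeSet, ∃ M : Subgraph G, M.IsPerfectMatching ∧ e ∈ M.edgeSet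

/-- An edge `e` of a matching covered graph `G` is removable. -/
def Removable (G : SimpleGraph V) (e : Sym2 V) : Prop :=
  e ∈ G.edgeSet ∧ MatchingCovered (G.deleteEdges {e})

/-- `G` is 3-connected. -/
def ThreeConnected (G : SimpleGraph V) : Prop :=
  4 ≤ Nat.card V ∧ ∀ S : Set V, S.ncard ≤ 2 → (G.induce Sᶜ).Connected

/-- A brick. -/
def IsBrick (G : SimpleGraph V) : Prop :=
  ThreeConnected G ∧ ∀ x y : V, x ≠ y → HasPM (G.induce ({x, y} : Set V)ᶜ)

/-- neighbours outside `S` of vertices of `S`. -/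
def Nbrs (G : SimpleGraph V) (S : Set V) : Set V :=
  {v | v ∉ S ∧ ∃ u ∈ S, G.Adj u v}

/-- factor-critical graph. -/
def FactorCritical (G : SimpleGraph V) : Prop :=
  ∀ v : V, HasPM (G.induce ({v} : Set V)ᶜ)

/-- `(U, W)` is a bipartition of `G`. -/
def IsBipartition (G : SimpleGraph V) (U W : Set V) : Prop :=
  Disjoint U W ∧ U ∪ W = Set.univ ∧
    ∀ a b : V, G.Adj a b → (a ∈ U ∧ b ∈ W) ∨ (a ∈ W ∧ b ∈ U)

/-- partner function of a perfect matching -/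
noncomputable def pmatch {G : SimpleGraph V} {M : Subgraph G} (hM : M.IsPerfectMatching)
    (v : V) : V :=
  (hM.1 (hM.2 v)).choose

lemma pmatch_adj {G : SimpleGraph V} {M : Subgraph G} (hM : M.IsPerfectMatching) (v : V) :
    M.Adj v (pmatch hM v) :=
  (hM.1 (hM.2 v)).choose_spec.1

lemma pmatch_eq {G : SimpleGraph V} {M : Subgraph G} (hM : M.IsPerfectMatching) {v w : V}
    (h : M.Adj v w) : pmatch hM v = w :=
  ((hM.1 (hM.2 v)).choose_spec.2 w h).symm

lemma pmatch_invol {G : SimpleGraph V} {M : Subgraph G} (hM : M.IsPerfectMatching) (v : V) :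
    pmatch hM (pmatch hM v) = v :=
  pmatch_eq hM (pmatch_adj hM v).symm

lemma pmatch_inj {G : SimpleGraph V} {M : Subgraph G} (hM : M.IsPerfectMatching) :
    Function.Injective (pmatch hM) := by
  intro a b h
  have := pmatch_invol hM a
  rw [h, pmatch_invol hM b] at this
  exact this.symm

lemma pmatch_adjG {G : SimpleGraph V} {M : Subgraph G} (hM : M.IsPerfectMatching) (v : V) :
    G.Adj v (pmatch hM v) := M.adj_sub (pmatch_adj hM v)

lemma pmatch_ne {G : SimpleGraph V} {M : Subgraph G} (hM : M.IsPerfectMatching) (v : V) :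
    pmatch hM v ≠ v := fun h => (pmatch_adjG hM v).ne' h

lemma hasPM_of_involution (G : SimpleGraph V) (f : V → V) (hinv : ∀ v, f (f v) = v)
    (hadj : ∀ v, G.Adj v (f v)) :
    ∃ M : Subgraph G, M.IsPerfectMatching ∧ ∀ v w, M.Adj v w ↔ f v = w := by
  refine ⟨⟨Set.univ, fun a b => f a = b, ?_, fun _ => trivial, ?_⟩, ⟨?_, fun v => trivial⟩,
    fun _ _ => Iff.rfl⟩
  · rintro a b rfl; exact hadj a
  · constructor; rintro a b rfl; exact hinv a
  · exact fun v _ => ⟨f v, rfl, fun y hy => Eq.symm hy⟩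

lemma pm_transfer {G1 G2 : SimpleGraph V} (h : G1 ≤ G2) {M : Subgraph G1}
    (hM : M.IsPerfectMatching) :
    ∃ M2 : Subgraph G2, M2.IsPerfectMatching ∧ ∀ v w, M2.Adj v w ↔ M.Adj v w :=
  ⟨⟨M.verts, M.Adj, fun hadj => h (M.adj_sub hadj), M.edge_vert, M.symm⟩,
    ⟨hM.1, hM.2⟩, fun _ _ => Iff.rfl⟩

/-- upper bound: number of odd components of G' - S is at most |S| when G' has a PM -/
lemma oddComps_le_of_hasPM [Fintype V] {G' : SimpleGraph V} (h : HasPM G') (S : Set V) :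
    oddComps (G'.induce Sᶜ) ≤ S.ncard := by
  classical
  obtain ⟨M, hM⟩ := h
  have key : ∀ c : (G'.induce Sᶜ).ConnectedComponent, Odd (Nat.card c.supp) →
      ∃ v : ↥(Sᶜ), v ∈ c.supp ∧ pmatch hM ↑v ∈ S := by
    intro c hc
    by_contra hcon
    push_neg at hcon
    have hmem : ∀ v : ↥(Sᶜ), v ∈ c.supp →
        ∃ hv : pmatch hM ↑v ∈ Sᶜ, (⟨pmatch hM ↑v, hv⟩ : ↥(Sᶜ)) ∈ c.supp := by
      intro v hv
      have h1 : pmatch hM ↑v ∈ Sᶜ := hcon v hv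
      refine ⟨h1, ?_⟩
      rw [ConnectedComponent.mem_supp_iff] at hv ⊢
      rw [← hv]
      exact ConnectedComponent.connectedComponentMk_eq_of_adj
        (by simpa using (pmatch_adjG hM (v : V)).symm)
    have heven : Even (Nat.card c.supp) := by
      have hinv : ∀ z : ↥c.supp, ∃ z' : ↥c.supp, ((z' : ↥(Sᶜ)) : V) = pmatch hM ↑(z : ↥(Sᶜ)) := by
        rintro ⟨v, hv⟩
        obtain ⟨h1, h2⟩ := hmem v hv
        exact ⟨⟨⟨pmatch hM ↑v, h1⟩, h2⟩, rfl⟩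
      choose g hg using hinv
      have hgg : ∀ z, g (g z) = z := by
        intro z
        apply Subtype.ext; apply Subtype.ext
        rw [hg (g z), hg z, pmatch_invol]
      have hne : ∀ z : ↥c.supp, (⊤ : SimpleGraph ↥c.supp).Adj z (g z) := by
        intro z
        have h2 : ((g z : ↥(Sᶜ)) : V) ≠ ((z : ↥(Sᶜ)) : V) := by
          rw [hg z]; exact (pmatch_adjG hM _).ne'
        simp only [top_adj]
        intro hzz
        exact h2 (by rw [← hzz])
      obtain ⟨N, hN, -⟩ := hasPM_of_involution (⊤ : SimpleGraph ↥c.supp) g hgg hne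
      haveI : Fintype ↥c.supp := Fintype.ofFinite _
      haveI : Fintype ↥N.verts := Fintype.ofFinite _
      have hev := hN.1.even_card
      have hverts : N.verts = Set.univ := Set.eq_univ_of_forall hN.2
      have h5 : Even (Nat.card ↥N.verts) := by
        rwa [Nat.card_coe_set_eq, Set.ncard_eq_toFinset_card']
      have h6 : Nat.card ↥N.verts = Nat.card ↥c.supp := by
        calc Nat.card ↥N.verts = Nat.card ↥(Set.univ : Set ↥c.supp) :=
              congrArg (fun s : Set ↥c.supp => Nat.card ↥s) hverts
          _ = Nat.card ↥c.supp := by rw [Nat.card_coe_set_eq, Set.ncard_univ]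
      exact h6 ▸ h5
    exact (Nat.not_even_iff_odd.2 hc) heven
  have hex : ∀ c : {c : (G'.induce Sᶜ).ConnectedComponent // Odd (Nat.card c.supp)},
      ∃ w : ↥S, ∃ v : ↥(Sᶜ), v ∈ c.1.supp ∧ pmatch hM ↑v = ↑w := by
    rintro ⟨c, hc⟩
    obtain ⟨v, hv, hvS⟩ := key c hc
    exact ⟨⟨pmatch hM ↑v, hvS⟩, v, hv, rfl⟩
  choose F v hv hFv using hex
  have hinjF : Function.Injective F := by
    rintro c1 c2 hF
    have hvv : (↑(v c1) : V) = ↑(v c2) := by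
      have h1 := hFv c1
      have h2 := hFv c2
      rw [hF] at h1
      have h3 := congrArg (pmatch hM) (h1.trans h2.symm)
      rwa [pmatch_invol, pmatch_invol] at h3
    have hveq : v c1 = v c2 := Subtype.ext hvv
    have e1 := (ConnectedComponent.mem_supp_iff _ _).1 (hv c1)
    have e2 := (ConnectedComponent.mem_supp_iff _ _).1 (hv c2)
    rw [hveq] at e1
    exact Subtype.ext (e1.symm.trans e2)
  calc oddComps (G'.induce Sᶜ) ≤ Nat.card ↥S := Nat.card_le_card_of_injective F hinjF
    _ = S.ncard := Nat.card_coe_set_eq S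

lemma oddComps_ge_of_isolated {α : Type*} [Fintype α] (K : SimpleGraph α) (I : Set α)
    (hiso : ∀ v ∈ I, ∀ w, ¬ K.Adj v w) (hodd : Odd ((Iᶜ : Set α).ncard)) :
    I.ncard + 1 ≤ oddComps K := by
  classical
  haveI : Fintype K.ConnectedComponent := Fintype.ofFinite _
  -- components of isolated vertices are singletons
  have hsupp : ∀ v ∈ I, (K.connectedComponentMk v).supp = {v} := by
    intro v hv
    ext w
    simp only [ConnectedComponent.mem_supp_iff, Set.mem_singleton_iff]
    constructor
    · intro h
      obtain ⟨q⟩ := (ConnectedComponent.exact h).symm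
      cases q with
      | nil => rfl
      | cons h' q => exact absurd h' (hiso v hv _)
    · rintro rfl; rfl
  set Im := K.connectedComponentMk '' I with hIm
  have hIm_odd : ∀ c ∈ Im, Odd (Nat.card c.supp) := by
    rintro c ⟨v, hv, rfl⟩
    rw [hsupp v hv]
    simp [Nat.card_coe_set_eq]
  have hIm_card : Im.ncard = I.ncard := by
    apply Set.ncard_image_of_injOn
    intro v1 h1 v2 h2 h
    have : v2 ∈ (K.connectedComponentMk v1).supp := by
      rw [ConnectedComponent.mem_supp_iff, h]
    rw [hsupp v1 h1] at this
    exact this.symm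
  have hmkIc : ∀ w : α, w ∉ I → K.connectedComponentMk w ∉ Im := by
    rintro w hw ⟨v, hv, h⟩
    have : w ∈ (K.connectedComponentMk v).supp := by
      rw [ConnectedComponent.mem_supp_iff, h]
    rw [hsupp v hv] at this
    exact hw (this ▸ hv)
  set T : Finset K.ConnectedComponent := Finset.univ.filter (fun c => c ∉ Im) with hT
  have hcard := Finset.card_eq_sum_card_fiberwise
    (f := K.connectedComponentMk) (s := (Iᶜ : Set α).toFinset) (t := T)
    (by intro w hw
        exact Finset.mem_coe.2 (Finset.mem_filter.2 ⟨Finset.mem_univ _, hmkIc w (by simpa using hw)⟩))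
  have hex : ∃ c₀ ∈ T,
      Odd (((Iᶜ : Set α).toFinset.filter (fun w => K.connectedComponentMk w = c₀)).card) := by
    by_contra hcon
    push_neg at hcon
    have heven : Even ((Iᶜ : Set α).toFinset.card) := by
      rw [hcard]
      exact Finset.even_sum _ (fun c hc => Nat.not_odd_iff_even.1 (hcon c hc))
    rw [← Set.ncard_eq_toFinset_card'] at heven
    exact (Nat.not_even_iff_odd.2 hodd) heven
  obtain ⟨c₀, hc₀T, hc₀odd⟩ := hex
  have hc₀Im : c₀ ∉ Im := by
    simpa [hT] using hc₀T
  have hfib : ((Iᶜ : Set α).toFinset.filter (fun w => K.connectedComponentMk w = c₀))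
      = c₀.supp.toFinset := by
    ext w
    simp only [Finset.mem_filter, Set.mem_toFinset, Set.mem_compl_iff,
      ConnectedComponent.mem_supp_iff]
    constructor
    · rintro ⟨-, h⟩; exact h
    · intro h
      refine ⟨fun hwI => hc₀Im ⟨w, hwI, h⟩, h⟩
  have hc₀_odd : Odd (Nat.card c₀.supp) := by
    rw [hfib] at hc₀odd
    rwa [Nat.card_coe_set_eq, Set.ncard_eq_toFinset_card']
  -- now collect
  set O : Set K.ConnectedComponent := {c | Odd (Nat.card c.supp)} with hO
  have hsub : insert c₀ Im ⊆ O := by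
    rintro c (rfl | hc)
    · exact hc₀_odd
    · exact hIm_odd c hc
  have h1 : (insert c₀ Im).ncard = I.ncard + 1 := by
    rw [Set.ncard_insert_of_notMem hc₀Im (Set.toFinite _), hIm_card]
  have h2 : oddComps K = O.ncard := by
    rw [oddComps, ← Nat.card_coe_set_eq]
    exact Nat.card_congr (Equiv.subtypeEquivRight (fun c => by simp [hO]))
  rw [h2, ← h1]
  exact Set.ncard_le_ncard hsub (Set.toFinite _)

/-- helper: ncard of subtype sets -/
lemma ncard_val_mem {S T : Set V} (h : T ⊆ S) :
    {z : ↥S | (z : V) ∈ T}.ncard = T.ncard := by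
  have himg : Subtype.val '' {z : ↥S | (z : V) ∈ T} = T := by
    ext v
    simp only [Set.mem_image, Set.mem_setOf_eq]
    constructor
    · rintro ⟨z, hz, rfl⟩; exact hz
    · intro hv; exact ⟨⟨v, h hv⟩, hv, rfl⟩
  calc {z : ↥S | (z : V) ∈ T}.ncard
      = (Subtype.val '' {z : ↥S | (z : V) ∈ T}).ncard :=
        (Set.ncard_image_of_injective _ Subtype.val_injective).symm
    _ = T.ncard := by rw [himg]

lemma compl_val_mem {S T : Set V} :
    ({z : ↥S | (z : V) ∈ T} : Set ↥S)ᶜ = {z : ↥S | (z : V) ∈ S \ T} := by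
  ext ⟨v, hv⟩
  simp [hv]

/-- if every matching edge not equal to e1/e2 crosses U-W, a PM containing e2 contains e1 -/
lemma pm_forced [Fintype V] {G : SimpleGraph V} {U W : Set V} {a1 b1 a2 b2 : V}
    (hd : Disjoint U W) (hcard : U.ncard = W.ncard)
    (ha2 : a2 ∈ W) (hb2 : b2 ∈ W)
    (hclass : ∀ p q : V, G.Adj p q → s(p,q) = s(a1,b1) ∨ s(p,q) = s(a2,b2) ∨
      ((p ∈ U ∧ q ∈ W) ∨ (p ∈ W ∧ q ∈ U)))
    {M : Subgraph G} (hM : M.IsPerfectMatching) (h2 : M.Adj a2 b2) : M.Adj a1 b1 := by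
  classical
  by_contra h1
  have himg : ∀ u ∈ U, pmatch hM u ∈ W \ {a2} := by
    intro u hu
    have hGadj := pmatch_adjG hM u
    have huW : u ∉ W := Set.disjoint_left.1 hd hu
    rcases hclass u (pmatch hM u) hGadj with h | h | h
    · exfalso
      rw [Sym2.eq_iff] at h
      rcases h with ⟨rfl, h⟩ | ⟨rfl, h⟩
      · exact h1 (h ▸ pmatch_adj hM u)
      · exact h1 (h ▸ pmatch_adj hM u).symm
    · exfalso
      rw [Sym2.eq_iff] at h
      rcases h with ⟨rfl, -⟩ | ⟨rfl, -⟩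
      · exact huW ha2
      · exact huW hb2
    · rcases h with ⟨-, hw⟩ | ⟨hw, -⟩
      · refine ⟨hw, ?_⟩
        intro hpa2
        have : u = pmatch hM a2 := by
          rw [← Set.mem_singleton_iff.1 hpa2, pmatch_invol]
        rw [pmatch_eq hM h2] at this
        exact huW (this ▸ hb2)
      · exact absurd hw huW
  have hsub : pmatch hM '' U ⊆ W \ {a2} := by
    rintro _ ⟨u, hu, rfl⟩; exact himg u hu
  have hle : U.ncard ≤ (W \ {a2}).ncard := by
    rw [← Set.ncard_image_of_injective U (pmatch_inj hM)]
    exact Set.ncard_le_ncard hsub (Set.toFinite _)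
  have hlt : (W \ {a2}).ncard + 1 = W.ncard := Set.ncard_diff_singleton_add_one ha2 (Set.toFinite _)
  omega

lemma key [Fintype V] (G : SimpleGraph V) (hG : IsBrick G)
    (a1 b1 a2 b2 : V) (he1 : G.Adj a1 b1) (he2 : G.Adj a2 b2)
    (hH : MatchingCovered (G.deleteEdges {s(a1, b1), s(a2, b2)}))
    (U W : Set V)
    (hbip : IsBipartition (G.deleteEdges {s(a1, b1), s(a2, b2)}) U W)
    (ha1 : a1 ∈ U) (hb1 : b1 ∈ U) (ha2 : a2 ∈ W) (hb2 : b2 ∈ W)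
    (x y : V) (hxy : G.Adj x y)
    (hex1 : s(x, y) ≠ s(a1, b1)) (hex2 : s(x, y) ≠ s(a2, b2))
    (hnonrem : ¬ Removable G s(x, y))
    (hremH : Removable (G.deleteEdges {s(a1, b1), s(a2, b2)}) s(x, y))
    (hxU : x ∈ U) :
    ∃ A1 A2 B1 B2 : Set V,
      A1 ∪ A2 = U ∧ Disjoint A1 A2 ∧ B1 ∪ B2 = W ∧ Disjoint B1 B2 ∧
      B1.ncard = A1.ncard + 1 ∧ A2.ncard = B2.ncard + 1 ∧
      a1 ∈ A2 ∧ b1 ∈ A2 ∧ a2 ∈ B1 ∧ b2 ∈ B1 ∧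
      ((x ∈ A1 ∧ y ∈ B2) ∨ (y ∈ A1 ∧ x ∈ B2)) ∧
      (∀ p ∈ A1, ∀ q ∈ B2, G.Adj p q → s(p, q) = s(x, y)) ∧
      IsBarrier (G.deleteEdges {s(x, y)}) B1 ∧
      IsBarrier (G.deleteEdges {s(x, y)}) A2 := by
  classical
  obtain ⟨hUW, hUcup, hcross⟩ := hbip
  set e1 : Sym2 V := s(a1, b1) with he1def
  set e2 : Sym2 V := s(a2, b2) with he2def
  set e : Sym2 V := s(x, y) with hedef
  set H : SimpleGraph V := G.deleteEdges {e1, e2} with hHdef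
  set Ge : SimpleGraph V := G.deleteEdges {e} with hGedef
  set He : SimpleGraph V := H.deleteEdges {e} with hHedef
  have hUmem : ∀ v ∈ U, v ∉ W := fun v hv => Set.disjoint_left.1 hUW hv
  have hWmem : ∀ v ∈ W, v ∉ U := fun v hv => Set.disjoint_right.1 hUW hv
  have huniv : ∀ v : V, v ∈ U ∨ v ∈ W := by
    intro v
    have : v ∈ U ∪ W := hUcup ▸ Set.mem_univ v
    exact this
  -- edge classification in G
  have hclass : ∀ p q : V, G.Adj p q → s(p,q) = e1 ∨ s(p,q) = e2 ∨
      ((p ∈ U ∧ q ∈ W) ∨ (p ∈ W ∧ q ∈ U)) := by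
    intro p q hpq
    by_cases h1 : s(p,q) = e1
    · exact Or.inl h1
    by_cases h2 : s(p,q) = e2
    · exact Or.inr (Or.inl h2)
    refine Or.inr (Or.inr (hcross p q ?_))
    simp only [hHdef, deleteEdges_adj, Set.mem_insert_iff, Set.mem_singleton_iff]
    exact ⟨hpq, by tauto⟩
  have hyW : y ∈ W := by
    rcases hclass x y hxy with h | h | h
    · exact absurd h hex1
    · exact absurd h hex2
    · rcases h with ⟨-, h⟩ | ⟨h, -⟩
      · exact h
      · exact absurd hxU (hWmem x h)
  -- distinctness
  have haab1 : a1 ≠ b1 := he1.ne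
  have haab2 : a2 ≠ b2 := he2.ne
  have ha1a2 : a1 ≠ a2 := fun h => hUmem a1 ha1 (h ▸ ha2)
  have ha1b2 : a1 ≠ b2 := fun h => hUmem a1 ha1 (h ▸ hb2)
  have hb1a2 : b1 ≠ a2 := fun h => hUmem b1 hb1 (h ▸ ha2)
  have hb1b2 : b1 ≠ b2 := fun h => hUmem b1 hb1 (h ▸ hb2)
  -- |U| = |W|
  have hcardUW : U.ncard = W.ncard := by
    obtain ⟨f₀, hf₀⟩ := hH.2.1
    obtain ⟨M, hM, -⟩ := hH.2.2 f₀ hf₀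
    have hhalf : ∀ A B : Set V, (∀ v ∈ A, pmatch hM v ∈ B) → A.ncard ≤ B.ncard := by
      intro A B h
      rw [← Set.ncard_image_of_injective A (pmatch_inj hM)]
      exact Set.ncard_le_ncard (by rintro _ ⟨v, hv, rfl⟩; exact h v hv) (Set.toFinite _)
    have hUle : U.ncard ≤ W.ncard := by
      refine hhalf U W fun v hv => ?_
      rcases hcross _ _ (M.adj_sub (pmatch_adj hM v)) with ⟨-, h⟩ | ⟨h, -⟩
      · exact h
      · exact absurd h (hUmem v hv)
    have hWle : W.ncard ≤ U.ncard := by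
      refine hhalf W U fun v hv => ?_
      rcases hcross _ _ (M.adj_sub (pmatch_adj hM v)) with ⟨h, -⟩ | ⟨-, h⟩
      · exact absurd h (hWmem v hv)
      · exact h
    omega
  -- parity forcing
  have hpar : ∀ M : Subgraph G, M.IsPerfectMatching → (M.Adj a1 b1 ↔ M.Adj a2 b2) := by
    intro M hM
    constructor
    · intro h1
      refine pm_forced (G := G) (U := W) (W := U) hUW.symm hcardUW.symm ha1 hb1 ?_ hM h1
      intro p q h
      rcases hclass p q h with h' | h' | h'
      · exact Or.inr (Or.inl h')
      · exact Or.inl h'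
      · tauto
    · intro h2
      exact pm_forced hUW hcardUW ha2 hb2 hclass hM h2
  -- He ≤ Ge and Ge connected with edges
  have hHeleGe : He ≤ Ge := by
    intro a b hab
    simp only [hHedef, hHdef, hGedef, deleteEdges_adj] at hab ⊢
    tauto
  have hHe : MatchingCovered He := hremH.2
  have hGeConn : Ge.Connected := hHe.1.mono hHeleGe
  have hGeNe : Ge.edgeSet.Nonempty := by
    obtain ⟨f, hf⟩ := hHe.2.1
    exact ⟨f, edgeSet_mono hHeleGe hf⟩
  have hnotMC : ¬ MatchingCovered Ge := fun h => hnonrem ⟨G.mem_edgeSet.2 hxy, h⟩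
  -- the bad edge
  have hbad : ∃ f, (f = e1 ∨ f = e2) ∧
      ∀ M : Subgraph Ge, M.IsPerfectMatching → f ∉ M.edgeSet := by
    have hne : ¬ (∀ f ∈ Ge.edgeSet, ∃ M : Subgraph Ge, M.IsPerfectMatching ∧ f ∈ M.edgeSet) :=
      fun hall => hnotMC ⟨hGeConn, hGeNe, hall⟩
    push_neg at hne
    obtain ⟨f, hfGe, hfno⟩ := hne
    refine ⟨f, ?_, fun M hM hmem => hfno M hM hmem⟩
    by_contra hcon
    push_neg at hcon
    have hfHe : f ∈ He.edgeSet := by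
      rw [hHedef, edgeSet_deleteEdges, hHdef, edgeSet_deleteEdges]
      rw [hGedef, edgeSet_deleteEdges] at hfGe
      simp only [Set.mem_diff, Set.mem_insert_iff, Set.mem_singleton_iff] at hfGe ⊢
      tauto
    obtain ⟨N, hN, hfN⟩ := hHe.2.2 f hfHe
    obtain ⟨M2, hM2, hiff⟩ := pm_transfer hHeleGe hN
    refine hfno M2 hM2 ?_
    have : M2.edgeSet = N.edgeSet := by
      ext f'
      induction f' using Sym2.ind with
      | _ u v => simp only [Subgraph.mem_edgeSet, hiff]
    rw [this]
    exact hfN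
  -- every PM through e1 goes through e
  have hC : ∀ M : Subgraph G, M.IsPerfectMatching → M.Adj a1 b1 → M.Adj x y := by
    obtain ⟨f, hf12, hfno⟩ := hbad
    intro M hM h1
    by_contra hxyM
    have hadjGe : ∀ u v : V, M.Adj u v → Ge.Adj u v := by
      intro u v huv
      simp only [hGedef, deleteEdges_adj, Set.mem_singleton_iff]
      refine ⟨M.adj_sub huv, fun hev => ?_⟩
      rw [hedef, Sym2.eq_iff] at hev
      rcases hev with ⟨rfl, rfl⟩ | ⟨rfl, rfl⟩
      · exact hxyM huv
      · exact hxyM huv.symm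
    let M2 : Subgraph Ge := ⟨M.verts, M.Adj, fun h => hadjGe _ _ h, M.edge_vert, M.symm⟩
    have hM2 : M2.IsPerfectMatching := ⟨hM.1, hM.2⟩
    refine hfno M2 hM2 ?_
    rcases hf12 with rfl | rfl
    · exact Subgraph.mem_edgeSet.2 h1
    · exact Subgraph.mem_edgeSet.2 ((hpar M hM).1 h1)
  -- a PM of G through e1, e2 and e
  have hM₁ex : ∃ M : Subgraph G, M.IsPerfectMatching ∧ M.Adj a1 b1 := by
    obtain ⟨N, hN⟩ := hG.2 a1 b1 haab1
    have hmemc : ∀ v : V, v ≠ a1 → v ≠ b1 → v ∈ ({a1, b1} : Set V)ᶜ := by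
      intro v h1 h2
      simp [h1, h2]
    set f : V → V := fun v =>
      if v = a1 then b1 else if v = b1 then a1 else
      if hv : v ∈ ({a1, b1} : Set V)ᶜ then ↑(pmatch hN ⟨v, hv⟩) else v with hfdef
    have hfa1 : f a1 = b1 := by simp [hfdef]
    have hfb1 : f b1 = a1 := by simp [hfdef, haab1.symm]
    have hfelse : ∀ (v : V) (h1 : v ≠ a1) (h2 : v ≠ b1),
        f v = ↑(pmatch hN ⟨v, hmemc v h1 h2⟩) := by
      intro v h1 h2
      simp only [hfdef, if_neg h1, if_neg h2, dif_pos (hmemc v h1 h2)]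
    have hsubne : ∀ z : ↥(({a1, b1} : Set V)ᶜ), (z : V) ≠ a1 ∧ (z : V) ≠ b1 := by
      rintro ⟨z, hz⟩
      simpa [Set.mem_compl_iff] using hz
    have hfinv : ∀ v, f (f v) = v := by
      intro v
      by_cases h1 : v = a1
      · rw [h1, hfa1, hfb1]
      by_cases h2 : v = b1
      · rw [h2, hfb1, hfa1]
      · rw [hfelse v h1 h2]
        obtain ⟨hw1, hw2⟩ := hsubne (pmatch hN ⟨v, hmemc v h1 h2⟩)
        rw [hfelse _ hw1 hw2]
        have : (⟨↑(pmatch hN ⟨v, hmemc v h1 h2⟩), hmemc _ hw1 hw2⟩ :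
            ↥(({a1, b1} : Set V)ᶜ)) = pmatch hN ⟨v, hmemc v h1 h2⟩ := by
          apply Subtype.ext; rfl
        rw [this, pmatch_invol]
    have hfadj : ∀ v, G.Adj v (f v) := by
      intro v
      by_cases h1 : v = a1
      · rw [h1, hfa1]; exact he1
      by_cases h2 : v = b1
      · rw [h2, hfb1]; exact he1.symm
      · rw [hfelse v h1 h2]
        have := pmatch_adjG hN ⟨v, hmemc v h1 h2⟩
        simpa using this
    obtain ⟨M₁, hM₁, hM₁iff⟩ := hasPM_of_involution G f hfinv hfadj
    exact ⟨M₁, hM₁, (hM₁iff a1 b1).2 hfa1⟩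
  obtain ⟨M₁, hM₁, hM₁a1⟩ := hM₁ex
  have hM₁a2 : M₁.Adj a2 b2 := (hpar M₁ hM₁).1 hM₁a1
  have hM₁xy : M₁.Adj x y := hC M₁ hM₁ hM₁a1
  have hp₁a1 : pmatch hM₁ a1 = b1 := pmatch_eq hM₁ hM₁a1
  have hp₁b1 : pmatch hM₁ b1 = a1 := pmatch_eq hM₁ hM₁a1.symm
  have hp₁a2 : pmatch hM₁ a2 = b2 := pmatch_eq hM₁ hM₁a2
  have hp₁b2 : pmatch hM₁ b2 = a2 := pmatch_eq hM₁ hM₁a2.symm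
  have hp₁x : pmatch hM₁ x = y := pmatch_eq hM₁ hM₁xy
  have hp₁y : pmatch hM₁ y = x := pmatch_eq hM₁ hM₁xy.symm
  -- Hall setup
  set U' : Set V := U \ {a1, b1} with hU'def
  set W' : Set V := W \ {a2, b2} with hW'def
  have hsubU : ({a1, b1} : Set V) ⊆ U := by
    rintro v (rfl | rfl)
    · exact ha1
    · exact hb1
  have hsubW : ({a2, b2} : Set V) ⊆ W := by
    rintro v (rfl | rfl)
    · exact ha2
    · exact hb2
  have hU'card : U'.ncard + 2 = U.ncard := by
    rw [hU'def, Set.ncard_diff hsubU (Set.toFinite _), Set.ncard_pair haab1]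
    have h1 := Set.ncard_le_ncard hsubU (Set.toFinite _)
    rw [Set.ncard_pair haab1] at h1
    omega
  have hW'card : W'.ncard + 2 = W.ncard := by
    rw [hW'def, Set.ncard_diff hsubW (Set.toFinite _), Set.ncard_pair haab2]
    have h1 := Set.ncard_le_ncard hsubW (Set.toFinite _)
    rw [Set.ncard_pair haab2] at h1
    omega
  have hU'spec : ∀ v ∈ U', v ≠ a1 ∧ v ≠ b1 ∧ v ≠ a2 ∧ v ≠ b2 := by
    rintro v ⟨hvU, hv⟩
    simp only [Set.mem_insert_iff, Set.mem_singleton_iff, not_or] at hv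
    exact ⟨hv.1, hv.2, fun h => hUmem v hvU (h ▸ ha2), fun h => hUmem v hvU (h ▸ hb2)⟩
  have hW'spec : ∀ v ∈ W', v ≠ a1 ∧ v ≠ b1 ∧ v ≠ a2 ∧ v ≠ b2 := by
    rintro v ⟨hvW, hv⟩
    simp only [Set.mem_insert_iff, Set.mem_singleton_iff, not_or] at hv
    exact ⟨fun h => hWmem v hvW (h ▸ ha1), fun h => hWmem v hvW (h ▸ hb1), hv.1, hv.2⟩
  have hcases : ∀ v : V, v = a1 ∨ v = b1 ∨ v = a2 ∨ v = b2 ∨ v ∈ U' ∨ v ∈ W' := by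
    intro v
    by_cases h1 : v = a1
    · tauto
    by_cases h2 : v = b1
    · tauto
    by_cases h3 : v = a2
    · tauto
    by_cases h4 : v = b2
    · tauto
    rcases huniv v with h | h
    · exact Or.inr (Or.inr (Or.inr (Or.inr (Or.inl ⟨h, by simp [h1, h2]⟩))))
    · exact Or.inr (Or.inr (Or.inr (Or.inr (Or.inr ⟨h, by simp [h3, h4]⟩))))
  set t : ↥U' → Finset V :=
    fun u => Finset.univ.filter (fun w => w ∈ W' ∧ G.Adj ↑u w ∧ s(↑u, w) ≠ e) with htdef
  have htmem : ∀ (u : ↥U') (w : V), w ∈ t u ↔ w ∈ W' ∧ G.Adj ↑u w ∧ s(↑u, w) ≠ e := by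
    intro u w
    simp [htdef]
  have hcardU' : Fintype.card ↥U' = U'.ncard := by
    rw [← Nat.card_eq_fintype_card, Nat.card_coe_set_eq]
  -- Hall violator exists
  have hhall : ¬ ∀ sF : Finset ↥U', sF.card ≤ (sF.biUnion t).card := by
    intro hall
    obtain ⟨g, hginj, hgmem⟩ := (Finset.all_card_le_biUnion_card_iff_existsInjective' t).1 hall
    have hgW' : ∀ u : ↥U', g u ∈ W' ∧ G.Adj ↑u (g u) ∧ s(↑u, g u) ≠ e :=
      fun u => (htmem u (g u)).1 (hgmem u)
    have himg : Finset.univ.image g = W'.toFinset := by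
      apply Finset.eq_of_subset_of_card_le
      · intro w hw
        simp only [Finset.mem_image] at hw
        obtain ⟨u, -, rfl⟩ := hw
        exact Set.mem_toFinset.2 (hgW' u).1
      · rw [Finset.card_image_of_injective _ hginj, Finset.card_univ, hcardU',
          ← Set.ncard_eq_toFinset_card']
        omega
    have hsurj : ∀ w ∈ W', ∃ u : ↥U', g u = w := by
      intro w hw
      have : w ∈ Finset.univ.image g := himg ▸ Set.mem_toFinset.2 hw
      simp only [Finset.mem_image] at this
      obtain ⟨u, -, h⟩ := this
      exact ⟨u, h⟩
    set f2 : V → V := fun v =>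
      if v = a1 then b1 else if v = b1 then a1 else
      if v = a2 then b2 else if v = b2 then a2 else
      if hv : v ∈ U' then ↑(g ⟨v, hv⟩)
      else if hw : ∃ u : ↥U', g u = v then ↑hw.choose else v with hf2def
    have hf2a1 : f2 a1 = b1 := by simp [hf2def]
    have hf2b1 : f2 b1 = a1 := by simp [hf2def, haab1.symm]
    have hf2a2 : f2 a2 = b2 := by simp [hf2def, ha1a2.symm, hb1a2.symm]
    have hf2b2 : f2 b2 = a2 := by simp [hf2def, ha1b2.symm, hb1b2.symm, haab2.symm]
    have hf2U' : ∀ (v : V) (hv : v ∈ U'), f2 v = ↑(g ⟨v, hv⟩) := by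
      intro v hv
      obtain ⟨h1, h2, h3, h4⟩ := hU'spec v hv
      simp only [hf2def, if_neg h1, if_neg h2, if_neg h3, if_neg h4, dif_pos hv]
    have hf2W' : ∀ (v : V) (hv : v ∈ W'), ∃ u : ↥U', g u = v ∧ f2 v = ↑u := by
      intro v hv
      have hex : ∃ u : ↥U', g u = v := hsurj v hv
      obtain ⟨h1, h2, h3, h4⟩ := hW'spec v hv
      have hvU' : v ∉ U' := fun h => hUmem v h.1 hv.1
      refine ⟨hex.choose, hex.choose_spec, ?_⟩
      simp only [hf2def, if_neg h1, if_neg h2, if_neg h3, if_neg h4, dif_neg hvU', dif_pos hex]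
    have hf2inv : ∀ v, f2 (f2 v) = v := by
      intro v
      rcases hcases v with rfl | rfl | rfl | rfl | hv | hv
      · rw [hf2a1, hf2b1]
      · rw [hf2b1, hf2a1]
      · rw [hf2a2, hf2b2]
      · rw [hf2b2, hf2a2]
      · rw [hf2U' v hv]
        obtain ⟨u, hu1, hu2⟩ := hf2W' _ (hgW' ⟨v, hv⟩).1
        rw [hu2]
        have : u = ⟨v, hv⟩ := hginj hu1
        rw [this]
      · obtain ⟨u, hu1, hu2⟩ := hf2W' v hv
        rw [hu2, hf2U' ↑u u.2, Subtype.coe_eta, hu1]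
    have hf2adj : ∀ v, Ge.Adj v (f2 v) := by
      have hGeadj : ∀ p q : V, G.Adj p q → s(p, q) ≠ e → Ge.Adj p q := by
        intro p q h1 h2
        simp only [hGedef, deleteEdges_adj, Set.mem_singleton_iff]
        exact ⟨h1, h2⟩
      intro v
      rcases hcases v with rfl | rfl | rfl | rfl | hv | hv
      · rw [hf2a1]; exact hGeadj _ _ he1 (fun h => hex1 h.symm)
      · rw [hf2b1]
        exact hGeadj _ _ he1.symm (fun h => hex1 (Sym2.eq_swap.trans h).symm)
      · rw [hf2a2]; exact hGeadj _ _ he2 (fun h => hex2 h.symm)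
      · rw [hf2b2]
        exact hGeadj _ _ he2.symm (fun h => hex2 (Sym2.eq_swap.trans h).symm)
      · rw [hf2U' v hv]
        exact hGeadj _ _ (hgW' ⟨v, hv⟩).2.1 (hgW' ⟨v, hv⟩).2.2
      · obtain ⟨u, hu1, hu2⟩ := hf2W' v hv
        rw [hu2]
        have h1 := (hgW' u).2.1
        have h2 := (hgW' u).2.2
        rw [hu1] at h1 h2
        exact hGeadj _ _ h1.symm (fun h => h2 (Sym2.eq_swap.trans h))
    obtain ⟨M', hM', hM'iff⟩ := hasPM_of_involution Ge f2 hf2inv hf2adj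
    obtain ⟨f, hf12, hfno⟩ := hbad
    refine hfno M' hM' ?_
    rcases hf12 with rfl | rfl
    · exact Subgraph.mem_edgeSet.2 ((hM'iff a1 b1).2 hf2a1)
    · exact Subgraph.mem_edgeSet.2 ((hM'iff a2 b2).2 hf2a2)
  push_neg at hhall
  obtain ⟨sF, hsF⟩ := hhall
  -- the violator
  set A1 : Set V := Subtype.val '' (↑sF : Set ↥U') with hA1def
  set N : Set V := ↑(sF.biUnion t) with hNdef
  have hA1U' : A1 ⊆ U' := by rintro _ ⟨u, -, rfl⟩; exact u.2
  have hA1U : A1 ⊆ U := fun v hv => (hA1U' hv).1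
  have hA1card : A1.ncard = sF.card := by
    rw [hA1def, Set.ncard_image_of_injective _ Subtype.val_injective, Set.ncard_coe_finset]
  have hNcard : N.ncard = (sF.biUnion t).card := Set.ncard_coe_finset _
  have hNW' : N ⊆ W' := by
    intro w hw
    rw [hNdef, Finset.mem_coe, Finset.mem_biUnion] at hw
    obtain ⟨u, -, hw⟩ := hw
    exact ((htmem u w).1 hw).1
  have hnbr : ∀ v ∈ A1, ∀ w : V, w ∈ W' → G.Adj v w → s(v, w) ≠ e → w ∈ N := by
    rintro _ ⟨u, hu, rfl⟩ w h1 h2 h3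
    rw [hNdef, Finset.mem_coe, Finset.mem_biUnion]
    exact ⟨u, Finset.mem_coe.1 hu, (htmem u w).2 ⟨h1, h2, h3⟩⟩
  have hstep : ∀ v ∈ A1, v ≠ x → pmatch hM₁ v ∈ N := by
    intro v hvA1 hvx
    have hvU' := hA1U' hvA1
    obtain ⟨h1, h2, h3, h4⟩ := hU'spec v hvU'
    have hvU : v ∈ U := hvU'.1
    have hGadj : G.Adj v (pmatch hM₁ v) := pmatch_adjG hM₁ v
    rcases hclass v (pmatch hM₁ v) hGadj with h | h | h
    · exfalso
      rw [he1def, Sym2.eq_iff] at h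
      rcases h with ⟨h', -⟩ | ⟨h', -⟩
      · exact h1 h'
      · exact h2 h'
    · exfalso
      rw [he2def, Sym2.eq_iff] at h
      rcases h with ⟨h', -⟩ | ⟨h', -⟩
      · exact h3 h'
      · exact h4 h'
    rcases h with ⟨-, hwW⟩ | ⟨hvW, -⟩
    · have hwa2 : pmatch hM₁ v ≠ a2 := by
        intro hh
        have : v = pmatch hM₁ a2 := by rw [← hh, pmatch_invol]
        rw [hp₁a2] at this
        exact h4 this
      have hwb2 : pmatch hM₁ v ≠ b2 := by
        intro hh
        have : v = pmatch hM₁ b2 := by rw [← hh, pmatch_invol]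
        rw [hp₁b2] at this
        exact h3 this
      have hwW' : pmatch hM₁ v ∈ W' := ⟨hwW, by simp [hwa2, hwb2]⟩
      have hne : s(v, pmatch hM₁ v) ≠ e := by
        intro hh
        rw [hedef, Sym2.eq_iff] at hh
        rcases hh with ⟨h', -⟩ | ⟨h', -⟩
        · exact hvx h'
        · exact hUmem v hvU (h' ▸ hyW)
      exact hnbr v hvA1 _ hwW' hGadj hne
    · exact absurd hvW (hUmem v hvU)
  have hslt : N.ncard < A1.ncard := by rw [hA1card, hNcard]; exact hsF
  have hxA1 : x ∈ A1 := by
    by_contra hx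
    have hle : A1.ncard ≤ N.ncard := by
      rw [← Set.ncard_image_of_injective A1 (pmatch_inj hM₁)]
      refine Set.ncard_le_ncard ?_ (Set.toFinite _)
      rintro _ ⟨v, hv, rfl⟩
      exact hstep v hv (fun h => hx (h ▸ hv))
    omega
  have hdiff_inj : (A1 \ {x}).ncard ≤ (N \ {y}).ncard := by
    rw [← Set.ncard_image_of_injective (A1 \ {x}) (pmatch_inj hM₁)]
    refine Set.ncard_le_ncard ?_ (Set.toFinite _)
    rintro _ ⟨v, ⟨hv1, hv2⟩, rfl⟩
    rw [Set.mem_singleton_iff] at hv2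
    refine ⟨hstep v hv1 hv2, ?_⟩
    rw [Set.mem_singleton_iff]
    intro hh
    have : v = pmatch hM₁ y := by rw [← hh, pmatch_invol]
    rw [hp₁y] at this
    exact hv2 this
  have hyN : y ∉ N := by
    intro hyN
    have h1 := Set.ncard_diff_singleton_add_one hxA1 (Set.toFinite _)
    have h2 := Set.ncard_diff_singleton_add_one hyN (Set.toFinite _)
    omega
  have hNcard_eq : N.ncard + 1 = A1.ncard := by
    have h1 := Set.ncard_diff_singleton_add_one hxA1 (Set.toFinite _)
    rw [Set.diff_singleton_eq_self hyN] at hdiff_inj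
    omega
  -- y is in W'
  have hy_a2 : y ≠ a2 := by
    intro hh
    have : x = b2 := by rw [← hp₁a2, ← hh, hp₁y]
    exact hUmem x hxU (this ▸ hb2)
  have hy_b2 : y ≠ b2 := by
    intro hh
    have : x = a2 := by rw [← hp₁b2, ← hh, hp₁y]
    exact hUmem x hxU (this ▸ ha2)
  have hyW' : y ∈ W' := ⟨hyW, by simp [hy_a2, hy_b2]⟩
  -- final sets
  set A2 : Set V := U \ A1 with hA2def
  set B2 : Set V := W' \ N with hB2def
  set B1 : Set V := W \ B2 with hB1def
  have hB2W' : B2 ⊆ W' := Set.diff_subset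
  have hB2W : B2 ⊆ W := fun v hv => (hB2W' hv).1
  have hB1W : B1 ⊆ W := Set.diff_subset
  -- cardinalities
  have hA2card : A2.ncard + A1.ncard = U.ncard := by
    rw [hA2def, Set.ncard_diff hA1U (Set.toFinite _)]
    have := Set.ncard_le_ncard hA1U (Set.toFinite _)
    omega
  have hB2card : B2.ncard + N.ncard = W'.ncard := by
    rw [hB2def, Set.ncard_diff hNW' (Set.toFinite _)]
    have := Set.ncard_le_ncard hNW' (Set.toFinite _)
    omega
  have hB1card : B1.ncard + B2.ncard = W.ncard := by
    rw [hB1def, Set.ncard_diff hB2W (Set.toFinite _)]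
    have := Set.ncard_le_ncard hB2W (Set.toFinite _)
    omega
  have hcard1 : B1.ncard = A1.ncard + 1 := by omega
  have hcard2 : A2.ncard = B2.ncard + 1 := by omega
  -- memberships
  have ha1A2 : a1 ∈ A2 := ⟨ha1, fun h => (hU'spec a1 (hA1U' h)).1 rfl⟩
  have hb1A2 : b1 ∈ A2 := ⟨hb1, fun h => (hU'spec b1 (hA1U' h)).2.1 rfl⟩
  have ha2B1 : a2 ∈ B1 := ⟨ha2, fun h => (hW'spec a2 (hB2W' h)).2.2.1 rfl⟩
  have hb2B1 : b2 ∈ B1 := ⟨hb2, fun h => (hW'spec b2 (hB2W' h)).2.2.2 rfl⟩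
  have hyB2 : y ∈ B2 := ⟨hyW', hyN⟩
  -- unique edge
  have huniq : ∀ p ∈ A1, ∀ q ∈ B2, G.Adj p q → s(p, q) = e := by
    intro p hp q hq hpq
    by_contra hne
    exact hq.2 (hnbr p hp q (hB2W' hq) hpq hne)
  -- perfect matching of Ge
  have hHasPMGe : HasPM Ge := by
    obtain ⟨f₀, hf₀⟩ := hHe.2.1
    obtain ⟨N₀, hN₀, -⟩ := hHe.2.2 f₀ hf₀
    obtain ⟨M₂, hM₂, -⟩ := pm_transfer hHeleGe hN₀
    exact ⟨M₂, hM₂⟩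
  -- barrier B1
  have hbar1 : IsBarrier Ge B1 := by
    refine le_antisymm (oddComps_le_of_hasPM hHasPMGe B1) ?_
    have hA1B1c : A1 ⊆ B1ᶜ := by
      intro v hv
      simp only [Set.mem_compl_iff]
      intro hvB1
      exact hUmem v (hA1U hv) (hB1W hvB1)
    have hiso : ∀ z ∈ {z : ↥(B1ᶜ) | (z : V) ∈ A1}, ∀ w, ¬ (Ge.induce B1ᶜ).Adj z w := by
      rintro ⟨v, hvc⟩ hvI ⟨w, hwc⟩ hadj
      have hGeadj : Ge.Adj v w := by simpa using hadj
      rw [hGedef, deleteEdges_adj, Set.mem_singleton_iff] at hGeadj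
      obtain ⟨hGadj, hnee⟩ := hGeadj
      have hvA1 : v ∈ A1 := hvI
      have hvU' : v ∈ U' := hA1U' hvA1
      obtain ⟨h1, h2, h3, h4⟩ := hU'spec v hvU'
      rcases hclass v w hGadj with h | h | h
      · rw [he1def, Sym2.eq_iff] at h
        rcases h with ⟨h', -⟩ | ⟨h', -⟩
        · exact h1 h'
        · exact h2 h'
      · rw [he2def, Sym2.eq_iff] at h
        rcases h with ⟨h', -⟩ | ⟨h', -⟩
        · exact h3 h'
        · exact h4 h'
      rcases h with ⟨-, hwW⟩ | ⟨hvW, -⟩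
      · have hwB2 : w ∈ B2 := by
          by_contra hwB2
          exact hwc ⟨hwW, hwB2⟩
        exact hnee (huniq v hvA1 w hwB2 hGadj)
      · exact hUmem v hvU'.1 hvW
    have hIcard : {z : ↥(B1ᶜ) | (z : V) ∈ A1}.ncard = A1.ncard := ncard_val_mem hA1B1c
    have hcompl : B1ᶜ \ A1 = A2 ∪ B2 := by
      ext v
      simp only [Set.mem_diff, Set.mem_compl_iff, Set.mem_union]
      constructor
      · rintro ⟨hvB1, hvA1⟩
        rcases huniv v with h | h
        · exact Or.inl ⟨h, hvA1⟩
        · refine Or.inr ?_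
          by_contra hvB2
          exact hvB1 ⟨h, hvB2⟩
      · rintro (⟨hvU, hvA1⟩ | hvB2)
        · exact ⟨fun h => hUmem v hvU (hB1W h), hvA1⟩
        · exact ⟨fun h => h.2 hvB2, fun h => hUmem v (hA1U h) (hB2W hvB2)⟩
    have hoddc : Odd (({z : ↥(B1ᶜ) | (z : V) ∈ A1}ᶜ : Set ↥(B1ᶜ)).ncard) := by
      rw [compl_val_mem, ncard_val_mem Set.diff_subset, hcompl,
        Set.ncard_union_eq (Set.disjoint_left.2
          (fun a ha hb => hUmem a ha.1 (hB2W hb))) (Set.toFinite _) (Set.toFinite _)]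
      exact ⟨B2.ncard, by omega⟩
    have := oddComps_ge_of_isolated (Ge.induce B1ᶜ) {z : ↥(B1ᶜ) | (z : V) ∈ A1} hiso hoddc
    rw [hIcard] at this
    omega
  -- barrier A2
  have hbar2 : IsBarrier Ge A2 := by
    refine le_antisymm (oddComps_le_of_hasPM hHasPMGe A2) ?_
    have hB2A2c : B2 ⊆ A2ᶜ := by
      intro v hv
      simp only [Set.mem_compl_iff]
      intro hvA2
      exact hUmem v hvA2.1 (hB2W hv)
    have hiso : ∀ z ∈ {z : ↥(A2ᶜ) | (z : V) ∈ B2}, ∀ w, ¬ (Ge.induce A2ᶜ).Adj z w := by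
      rintro ⟨v, hvc⟩ hvI ⟨w, hwc⟩ hadj
      have hGeadj : Ge.Adj v w := by simpa using hadj
      rw [hGedef, deleteEdges_adj, Set.mem_singleton_iff] at hGeadj
      obtain ⟨hGadj, hnee⟩ := hGeadj
      have hvB2 : v ∈ B2 := hvI
      have hvW' : v ∈ W' := hB2W' hvB2
      obtain ⟨h1, h2, h3, h4⟩ := hW'spec v hvW'
      rcases hclass v w hGadj with h | h | h
      · rw [he1def, Sym2.eq_iff] at h
        rcases h with ⟨h', -⟩ | ⟨h', -⟩
        · exact h1 h'
        · exact h2 h'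
      · rw [he2def, Sym2.eq_iff] at h
        rcases h with ⟨h', -⟩ | ⟨h', -⟩
        · exact h3 h'
        · exact h4 h'
      rcases h with ⟨hvU, -⟩ | ⟨-, hwU⟩
      · exact hWmem v hvW'.1 hvU
      · have hwA1 : w ∈ A1 := by
          by_contra hwA1
          exact hwc ⟨hwU, hwA1⟩
        refine hnee ?_
        have := huniq w hwA1 v hvB2 hGadj.symm
        rw [Sym2.eq_swap] at this
        exact this
    have hIcard : {z : ↥(A2ᶜ) | (z : V) ∈ B2}.ncard = B2.ncard := ncard_val_mem hB2A2c
    have hcompl : A2ᶜ \ B2 = A1 ∪ B1 := by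
      ext v
      simp only [Set.mem_diff, Set.mem_compl_iff, Set.mem_union]
      constructor
      · rintro ⟨hvA2, hvB2⟩
        rcases huniv v with h | h
        · refine Or.inl ?_
          by_contra hvA1
          exact hvA2 ⟨h, hvA1⟩
        · exact Or.inr ⟨h, hvB2⟩
      · rintro (hvA1 | hvB1)
        · exact ⟨fun h => h.2 hvA1, fun h => hUmem v (hA1U hvA1) (hB2W h)⟩
        · exact ⟨fun h => hUmem v h.1 (hB1W hvB1), fun h => hvB1.2 h⟩
    have hoddc : Odd (({z : ↥(A2ᶜ) | (z : V) ∈ B2}ᶜ : Set ↥(A2ᶜ)).ncard) := by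
      rw [compl_val_mem, ncard_val_mem Set.diff_subset, hcompl,
        Set.ncard_union_eq (Set.disjoint_left.2
          (fun a ha hb => hUmem a (hA1U ha) (hB1W hb))) (Set.toFinite _) (Set.toFinite _)]
      exact ⟨A1.ncard, by omega⟩
    have := oddComps_ge_of_isolated (Ge.induce A2ᶜ) {z : ↥(A2ᶜ) | (z : V) ∈ B2} hiso hoddc
    rw [hIcard] at this
    omega
  exact ⟨A1, A2, B1, B2, Set.union_diff_cancel hA1U,
    Set.disjoint_left.2 (fun a ha hb => hb.2 ha),
    Set.diff_union_of_subset hB2W,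
    Set.disjoint_left.2 (fun a ha hb => ha.2 hb),
    hcard1, hcard2, ha1A2, hb1A2, ha2B1, hb2B1,
    Or.inl ⟨hxA1, hyB2⟩, huniq, hbar1, hbar2⟩

/-- structure of nonremovable edges of type I in a near-bipartite
brick. -/
theorem stmt8 [Fintype V] (G : SimpleGraph V) (hG : IsBrick G)
    (a1 b1 a2 b2 : V) (he1 : G.Adj a1 b1) (he2 : G.Adj a2 b2)
    (hnee : s(a1, b1) ≠ s(a2, b2))
    (hnr1 : ¬ Removable G s(a1, b1)) (hnr2 : ¬ Removable G s(a2, b2))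
    (hH : MatchingCovered (G.deleteEdges {s(a1, b1), s(a2, b2)}))
    (U W : Set V)
    (hbip : IsBipartition (G.deleteEdges {s(a1, b1), s(a2, b2)}) U W)
    (ha1 : a1 ∈ U) (hb1 : b1 ∈ U) (ha2 : a2 ∈ W) (hb2 : b2 ∈ W)
    (x y : V) (hxy : G.Adj x y)
    (hex1 : s(x, y) ≠ s(a1, b1)) (hex2 : s(x, y) ≠ s(a2, b2))
    (hnonrem : ¬ Removable G s(x, y))
    (hremH : Removable (G.deleteEdges {s(a1, b1), s(a2, b2)}) s(x, y)) :
    ∃ A1 A2 B1 B2 : Set V,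
      A1 ∪ A2 = U ∧ Disjoint A1 A2 ∧ B1 ∪ B2 = W ∧ Disjoint B1 B2 ∧
      B1.ncard = A1.ncard + 1 ∧ A2.ncard = B2.ncard + 1 ∧
      a1 ∈ A2 ∧ b1 ∈ A2 ∧ a2 ∈ B1 ∧ b2 ∈ B1 ∧
      ((x ∈ A1 ∧ y ∈ B2) ∨ (y ∈ A1 ∧ x ∈ B2)) ∧
      (∀ p ∈ A1, ∀ q ∈ B2, G.Adj p q → s(p, q) = s(x, y)) ∧
      IsBarrier (G.deleteEdges {s(x, y)}) B1 ∧
      IsBarrier (G.deleteEdges {s(x, y)}) A2 := by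
  have hxyH : (G.deleteEdges {s(a1, b1), s(a2, b2)}).Adj x y :=
    (SimpleGraph.mem_edgeSet _).1 hremH.1
  rcases hbip.2.2 x y hxyH with hc | hc
  · exact key G hG a1 b1 a2 b2 he1 he2 hH U W hbip ha1 hb1 ha2 hb2 x y hxy hex1 hex2
      hnonrem hremH hc.1
  · obtain ⟨A1, A2, B1, B2, g1, g2, g3, g4, g5, g6, g7, g8, g9, g10, g11, g12, g13, g14⟩ :=
      key G hG a1 b1 a2 b2 he1 he2 hH U W hbip ha1 hb1 ha2 hb2 y x hxy.symm
        (by rw [show s(y,x) = s(x,y) from Sym2.eq_swap]; exact hex1) (by rw [show s(y,x) = s(x,y) from Sym2.eq_swap]; exact hex2)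
        (by rw [show s(y,x) = s(x,y) from Sym2.eq_swap]; exact hnonrem) (by rw [show s(y,x) = s(x,y) from Sym2.eq_swap]; exact hremH) hc.2
    have hsw : s(x, y) = s(y, x) := Sym2.eq_swap
    refine ⟨A1, A2, B1, B2, g1, g2, g3, g4, g5, g6, g7, g8, g9, g10, g11.symm, ?_, ?_, ?_⟩
    · intro p hp q hq hpq
      rw [hsw]
      exact g12 p hp q hq hpq
    · rw [hsw]; exact g13
    · rw [hsw]; exact g14
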